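/- In the free group F₂ on x, y, the normal closure of x³y⁻⁴ and xyxy⁻¹x⁻¹y⁻¹ is all of F₂; equivalently, AK(3) = ⟨x, y | x³ = y⁴, xyx = yxy⟩ is a presentation of the trivial group. -/

import Mathlib

/-- The free group on two generators `x`, `y`. -/
abbrev F2 : Type := FreeGroup (Fin 2)

def x : F2 := FreeGroup.of 0
def y : F2 := FreeGroup.of 1

/-- A single AC-move on a balanced presentation `(r₁, r₂)`:
replace `r₁` by `r₁ r₂^{±1}`, or `r₂` by `r₂ r₁^{±1}`, or some `rᵢ` by `rᵢ⁻¹`,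
or some `rᵢ` by `g rᵢ g⁻¹` with `g ∈ {x, y, x⁻¹, y⁻¹}`. -/
def ACMove (p q : F2 × F2) : Prop :=
  q = (p.1 * p.2, p.2) ∨ q = (p.1 * p.2⁻¹, p.2) ∨
  q = (p.1, p.2 * p.1) ∨ q = (p.1, p.2 * p.1⁻¹) ∨
  q = (p.1⁻¹, p.2) ∨ q = (p.1, p.2⁻¹) ∨
  ∃ g : F2, (g = x ∨ g = y ∨ g = x⁻¹ ∨ g = y⁻¹) ∧
    (q = (g * p.1 * g⁻¹, p.2) ∨ q = (p.1, g * p.2 * g⁻¹))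

/-- Two balanced presentations are AC-equivalent if one can be transformed into the
other by a finite sequence of AC-moves. -/
def ACEquiv : F2 × F2 → F2 × F2 → Prop := Relation.ReflTransGen ACMove

/-- The length of a presentation: the sum of the word lengths of the two relators. -/
def presLength (p : F2 × F2) : ℕ := p.1.norm + p.2.norm

/-- The exponent sum on `x`: the `x`-coordinate of the abelianization. -/
def expSumX : F2 →* Multiplicative ℤ :=
  FreeGroup.lift (fun i => if i = 0 then Multiplicative.ofAdd (1 : ℤ) else 1)

/-- In any group, the relations `a³ = b⁴` and `aba = bab` force `a = b = 1`. -/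
lemma trivial_of_rels {G : Type*} [Group G] (a b : G)
    (h1 : a ^ 3 = b ^ 4) (h2 : a * b * a = b * a * b) : a = 1 ∧ b = 1 := by
  have hc : a * b ^ 4 = b ^ 4 * a := by rw [← h1, ← pow_succ, ← pow_succ']
  have ha : a = (b * a) * b * (b * a)⁻¹ := by
    have : (b * a) * b = a * (b * a) := by rw [← mul_assoc, ← h2]
    rw [this]; group
  have ha3 : a ^ 3 = (b * a) * b ^ 3 * (b * a)⁻¹ := by
    conv_lhs => rw [ha]
    rw [pow_succ, pow_succ, pow_one, pow_succ, pow_succ, pow_one]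
    group
  have hb4 : (b * a) * b ^ 4 * (b * a)⁻¹ = b ^ 4 := by
    have : b * (a * b ^ 4) * a⁻¹ * b⁻¹ = b * (b ^ 4 * a) * a⁻¹ * b⁻¹ := by rw [hc]
    calc (b * a) * b ^ 4 * (b * a)⁻¹ = b * (a * b ^ 4) * a⁻¹ * b⁻¹ := by group
      _ = b * (b ^ 4 * a) * a⁻¹ * b⁻¹ := this
      _ = b ^ 4 := by group
  have key : (b * a) * b ^ 3 * (b * a)⁻¹ = (b * a) * b ^ 4 * (b * a)⁻¹ := by
    rw [hb4, ← h1, ha3]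
  have h34 : b ^ 3 = b ^ 4 := by
    have := mul_right_cancel key
    exact mul_left_cancel this
  have hb : b = 1 := by
    have : b ^ 3 * 1 = b ^ 3 * b := by rw [mul_one, ← pow_succ]; exact h34
    exact (mul_left_cancel this).symm
  have ha1 : a = 1 := by
    have : a * a = a * 1 := by
      have := h2
      rw [hb] at this
      simpa using this.symm
    exact mul_left_cancel this
  exact ⟨ha1, hb⟩

/-- The Akbulut–Kirby presentation AK(3) = ⟨x, y ∣ x³ = y⁴, xyx = yxy⟩. -/

def AK3 : F2 × F2 := (x ^ 3 * (y ^ 4)⁻¹, x * y * x * y⁻¹ * x⁻¹ * y⁻¹)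

theorem AK3_presents_trivial_group :
    Subgroup.normalClosure
      ({x ^ 3 * (y ^ 4)⁻¹, x * y * x * y⁻¹ * x⁻¹ * y⁻¹} : Set F2) = ⊤ := by
  set S : Set F2 := {x ^ 3 * (y ^ 4)⁻¹, x * y * x * y⁻¹ * x⁻¹ * y⁻¹} with hS
  set N := Subgroup.normalClosure S with hN
  let π := QuotientGroup.mk' N
  have mem1 : (x ^ 3 * (y ^ 4)⁻¹ : F2) ∈ N :=
    Subgroup.subset_normalClosure (by simp [hS])
  have mem2 : (x * y * x * y⁻¹ * x⁻¹ * y⁻¹ : F2) ∈ N :=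
    Subgroup.subset_normalClosure (by simp [hS])
  have e1 : π (x ^ 3 * (y ^ 4)⁻¹) = 1 := (QuotientGroup.eq_one_iff _).mpr mem1
  have e2 : π (x * y * x * y⁻¹ * x⁻¹ * y⁻¹) = 1 := (QuotientGroup.eq_one_iff _).mpr mem2
  have h1 : (π x) ^ 3 = (π y) ^ 4 := by
    have := e1
    simp only [map_mul, map_pow, map_inv] at this
    rw [mul_inv_eq_one] at this
    exact this
  have h2 : π x * π y * π x = π y * π x * π y := by
    have := e2
    simp only [map_mul, map_inv] at this
    have h' : (π x * π y * π x) * (π y * π x * π y)⁻¹ = 1 := by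
      calc (π x * π y * π x) * (π y * π x * π y)⁻¹
          = π x * π y * π x * (π y)⁻¹ * (π x)⁻¹ * (π y)⁻¹ := by group
        _ = 1 := this
    exact mul_inv_eq_one.mp h'
  obtain ⟨hx1, hy1⟩ := trivial_of_rels (π x) (π y) h1 h2
  rw [Subgroup.eq_top_iff']
  intro g
  rw [← QuotientGroup.eq_one_iff (N := N)]
  show π g = 1
  have : π = 1 := by
    ext i
    fin_cases i
    · exact hx1
    · exact hy1
  rw [this]; rfl
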